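/- Euler's pentagonal number theorem, restated via the trefoil sign sequence: define ε : ℕ → ℤ by ε(m) = -1 if m ≡ 1 or 11 (mod 12), ε(m) = +1 if m ≡ 5 or 7 (mod 12), and ε(m) = 0 otherwise. Then as formal power series in q, ∑_{m ≥ 1} ε(m) · q^{(m² − 1)/24} = −∏_{n ≥ 1} (1 − qⁿ). (Note (m² − 1)/24 is a nonnegative integer whenever ε(m) ≠ 0.) -/

import Mathlib

open PowerSeries

/-- The sign sequence of the trefoil: `-1` if `m ≡ 1, 11 (mod 12)`,
`+1` if `m ≡ 5, 7 (mod 12)`, and `0` otherwise. -/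
def trefEps (m : ℕ) : ℤ :=
  if m % 12 = 1 ∨ m % 12 = 11 then -1
  else if m % 12 = 5 ∨ m % 12 = 7 then 1
  else 0

namespace Pent

/-- Exceptional (pentagonal) sets of Franklin's involution. -/
def isExc (S : Finset ℕ) : Prop :=
  ∃ j : ℕ, S = Finset.Icc (j+1) (2*j+1) ∨ S = Finset.Icc (j+1) (2*j)

/-- the top-run length of `S` -/
noncomputable def runlen (S : Finset ℕ) : ℕ :=
  Nat.findGreatest (fun u => Finset.Icc (S.sup id - u + 1) (S.sup id) ⊆ S) (S.sup id)

/-- Franklin's involution on finite sets of positive integers. -/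
noncomputable def phi (S : Finset ℕ) : Finset ℕ :=
  if Finset.Icc (S.sup id - sInf (S : Set ℕ) + 1) (S.sup id) ⊆ S then
    (S.erase (sInf (S : Set ℕ))).image
      (fun x => if S.sup id - sInf (S : Set ℕ) + 1 ≤ x then x + 1 else x)
  else
    insert (runlen S) (S.image fun x => if S.sup id - runlen S + 1 ≤ x then x - 1 else x)

lemma mem_le_sum {S : Finset ℕ} {x : ℕ} (hx : x ∈ S) : x ≤ S.sum id :=
  Finset.single_le_sum (f := id) (fun _ _ => Nat.zero_le _) hx

lemma sup_mem {S : Finset ℕ} (hne : S.Nonempty) : S.sup id ∈ S := by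
  obtain ⟨b, hb, he⟩ := Finset.exists_mem_eq_sup S hne id
  simpa [he] using hb

lemma t_eq {S : Finset ℕ} (h0 : 0 ∉ S) {u : ℕ} (h1 : 1 ≤ u) (h2 : u ≤ S.sup id)
    (h3 : Finset.Icc (S.sup id - u + 1) (S.sup id) ⊆ S) (h4 : S.sup id - u ∉ S) :
    runlen S = u := by
  rw [runlen]
  set M := S.sup id
  set t := Nat.findGreatest (fun v => Finset.Icc (M - v + 1) M ⊆ S) M with ht
  have hut : u ≤ t := Nat.le_findGreatest h2 h3
  rcases Nat.lt_or_ge u t with hlt | hge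
  · exfalso
    have htM : t ≤ M := Nat.findGreatest_le M
    have hsp : Finset.Icc (M - t + 1) M ⊆ S := by
      have h := Nat.findGreatest_spec (P := fun v => Finset.Icc (M - v + 1) M ⊆ S) h2 h3
      rw [← ht] at h; exact h
    exact h4 (hsp (by simp only [Finset.mem_Icc]; omega))
  · omega


lemma runlen_facts {S : Finset ℕ} (h0 : 0 ∉ S) (hne : S.Nonempty) :
    1 ≤ runlen S ∧ runlen S ≤ S.sup id ∧
    Finset.Icc (S.sup id - runlen S + 1) (S.sup id) ⊆ S ∧ (S.sup id - runlen S ∉ S) := by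
  have hMmem : S.sup id ∈ S := sup_mem hne
  have hM1 : 1 ≤ S.sup id := by
    rcases Nat.eq_zero_or_pos (S.sup id) with h | h
    · rw [h] at hMmem; exact absurd hMmem h0
    · exact h
  rw [runlen]
  set M := S.sup id with hM
  set P : ℕ → Prop := fun u => Finset.Icc (M - u + 1) M ⊆ S with hP
  have hP1 : P 1 := by
    intro x hx
    simp only [Finset.mem_Icc] at hx
    have : x = M := by omega
    rwa [this]
  refine ⟨Nat.le_findGreatest hM1 hP1, Nat.findGreatest_le M,
    Nat.findGreatest_spec hM1 hP1, ?_⟩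
  intro hmem
  set t := Nat.findGreatest P M with ht
  have hteM : t ≤ M := Nat.findGreatest_le M
  have hT2 : P t := Nat.findGreatest_spec hM1 hP1
  rcases Nat.eq_or_lt_of_le hteM with heq | hlt
  · rw [heq] at hmem; simp only [Nat.sub_self] at hmem; exact h0 hmem
  · have hP' : P (t + 1) := by
      show Finset.Icc (M - (t + 1) + 1) M ⊆ S
      intro x hx
      simp only [Finset.mem_Icc] at hx
      rcases Nat.eq_or_lt_of_le hx.1 with heq2 | hlt2
      · have : x = M - t := by omega
        rwa [this]
      · exact hT2 (by simp only [Finset.mem_Icc]; omega)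
    have hk : Nat.findGreatest P M < t + 1 := by rw [← ht]; omega
    exact Nat.findGreatest_is_greatest hk (by omega) hP'

lemma stepA {S : Finset ℕ} (h0 : 0 ∉ S) (hne : S.Nonempty)
    (hA : Finset.Icc (S.sup id - sInf (S : Set ℕ) + 1) (S.sup id) ⊆ S)
    (hexc : ¬ isExc S) :
    (phi S).sum id = S.sum id ∧ 0 ∉ phi S ∧ ¬ isExc (phi S) ∧
      phi (phi S) = S ∧ S.card = (phi S).card + 1 := by
  set M := S.sup id with hM
  set s := sInf (S : Set ℕ) with hs
  set θ := M - s + 1 with hθ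
  have hsmem : s ∈ S := Nat.sInf_mem (Finset.coe_nonempty.mpr hne)
  have hs1 : 1 ≤ s := by
    rcases Nat.eq_zero_or_pos s with h | h
    · exact absurd (h ▸ hsmem) h0
    · exact h
  have hsle : ∀ x ∈ S, s ≤ x := fun x hx => Nat.sInf_le hx
  have hMge : ∀ x ∈ S, x ≤ M := fun x hx => Finset.le_sup (f := id) hx
  have hsM : s ≤ M := hMge s hsmem
  have hM2s : 2 * s ≤ M := by
    have hx : M - s + 1 ∈ S := hA (by simp only [Finset.mem_Icc]; omega)
    have h1 : s ≤ M - s + 1 := hsle _ hx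
    rcases Nat.lt_or_ge (M + 1) (2 * s + 1) with h | h
    · exfalso
      have hSeq : S = Finset.Icc s M := by
        apply Finset.Subset.antisymm
        · intro x hx2
          simp only [Finset.mem_Icc]
          exact ⟨hsle x hx2, hMge x hx2⟩
        · intro x hx2
          simp only [Finset.mem_Icc] at hx2
          exact hA (by simp only [Finset.mem_Icc]; omega)
      exact hexc ⟨s - 1, Or.inl (by rw [hSeq]; congr 1 <;> omega)⟩
    · omega
  have hθs : s < θ := by omega
  have hphi : phi S = (S.erase s).image (fun x => if θ ≤ x then x + 1 else x) := by
    rw [phi, if_pos hA]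
  set S' := (S.erase s).image (fun x => if θ ≤ x then x + 1 else x) with hS'
  have charA : ∀ y, y ∈ S' ↔ ((y ∈ S ∧ y ≠ s ∧ y < θ) ∨ (θ + 1 ≤ y ∧ y ≤ M + 1)) := by
    intro y
    simp only [hS', Finset.mem_image, Finset.mem_erase]
    constructor
    · rintro ⟨x, ⟨hxs, hxS⟩, rfl⟩
      have hxM : x ≤ M := hMge x hxS
      by_cases hx : θ ≤ x
      · right; rw [if_pos hx]; omega
      · left; rw [if_neg hx]; exact ⟨hxS, hxs, by omega⟩
    · rintro (⟨hyS, hys, hyθ⟩ | ⟨h1, h2⟩)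
      · exact ⟨y, ⟨hys, hyS⟩, by rw [if_neg (by omega)]⟩
      · refine ⟨y - 1, ⟨by omega, hA (by simp only [Finset.mem_Icc]; omega)⟩, ?_⟩
        rw [if_pos (by omega)]; omega
  have hθnot : θ ∉ S' := by
    rw [charA]; push_neg
    constructor
    · rintro - -; omega
    · omega
  have hmemM1 : M + 1 ∈ S' := by rw [charA]; right; omega
  have hub' : ∀ y ∈ S', y ≤ M + 1 := by
    intro y hy; rw [charA] at hy
    rcases hy with ⟨hyS, -, -⟩ | ⟨-, h⟩
    · exact le_trans (hMge y hyS) (Nat.le_succ M)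
    · exact h
  have hlb' : ∀ y ∈ S', s + 1 ≤ y := by
    intro y hy; rw [charA] at hy
    rcases hy with ⟨hyS, hys, -⟩ | ⟨h, -⟩
    · have := hsle y hyS; omega
    · omega
  have hne' : S'.Nonempty := ⟨M + 1, hmemM1⟩
  have h0' : 0 ∉ S' := fun h => by have := hlb' 0 h; omega
  have hsup' : S'.sup id = M + 1 :=
    le_antisymm (Finset.sup_le hub') (Finset.le_sup (f := id) hmemM1)
  have hsinf1 : s + 1 ≤ sInf (S' : Set ℕ) := hlb' _ (Nat.sInf_mem (Finset.coe_nonempty.mpr hne'))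
  have hsinf2 : sInf (S' : Set ℕ) ≤ M + 1 := Nat.sInf_le hmemM1
  have hB' : ¬ Finset.Icc (S'.sup id - sInf (S' : Set ℕ) + 1) (S'.sup id) ⊆ S' := by
    intro hsub
    exact hθnot (hsub (by simp only [Finset.mem_Icc, hsup']; omega))
  have ht' : runlen S' = s := by
    apply t_eq h0' hs1
    · rw [hsup']; omega
    · rw [hsup']
      intro y hy
      simp only [Finset.mem_Icc] at hy
      rw [charA]; right; omega
    · rw [hsup']
      have : M + 1 - s = θ := by omega
      rw [this]; exact hθnot
  have hphi2 : phi S' = S := by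
    rw [phi, if_neg hB']
    simp only [ht', hsup']
    apply Finset.ext
    intro y
    simp only [Finset.mem_insert, Finset.mem_image]
    constructor
    · rintro (rfl | ⟨x, hx, rfl⟩)
      · exact hsmem
      · rw [charA] at hx
        rcases hx with ⟨hxS, -, hxθ⟩ | ⟨h1, h2⟩
        · rw [if_neg (by omega)]; exact hxS
        · rw [if_pos (by omega)]
          exact hA (by simp only [Finset.mem_Icc]; omega)
    · intro hy
      by_cases hys : y = s
      · exact Or.inl hys
      · right
        by_cases hyθ : y < θ
        · exact ⟨y, (charA y).mpr (Or.inl ⟨hy, hys, hyθ⟩), by rw [if_neg (by omega)]⟩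
        · refine ⟨y + 1, (charA (y + 1)).mpr (Or.inr ⟨by omega, ?_⟩), ?_⟩
          · have := hMge y hy; omega
          · rw [if_pos (by omega)]; omega
  have finj : Function.Injective (fun x => if θ ≤ x then x + 1 else x) := by
    intro a b hab
    simp only at hab
    split_ifs at hab <;> omega
  have hcard : S.card = S'.card + 1 := by
    rw [hS', Finset.card_image_of_injective _ finj, Finset.card_erase_of_mem hsmem]
    have : 0 < S.card := Finset.card_pos.mpr hne
    omega
  have hfilter : (S.erase s).filter (fun x => θ ≤ x) = Finset.Icc θ M := by
    apply Finset.ext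
    intro z
    simp only [Finset.mem_filter, Finset.mem_erase, Finset.mem_Icc]
    constructor
    · rintro ⟨⟨hzs, hzS⟩, hz⟩
      exact ⟨hz, hMge z hzS⟩
    · rintro ⟨h1, h2⟩
      have hzS : z ∈ S := hA (by simp only [Finset.mem_Icc]; omega)
      exact ⟨⟨by omega, hzS⟩, h1⟩
  have hsum : S'.sum id = S.sum id := by
    rw [hS', Finset.sum_image (fun a _ b _ h => finj h)]
    simp only [id_eq]
    have h1 : ∀ x ∈ S.erase s, (if θ ≤ x then x + 1 else x)
        = x + (if θ ≤ x then 1 else 0) := by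
      intro x _; split_ifs <;> omega
    rw [Finset.sum_congr rfl h1, Finset.sum_add_distrib]
    have h5 : (∑ x ∈ S.erase s, if θ ≤ x then (1:ℕ) else 0) = s := by
      rw [Finset.sum_ite, Finset.sum_const, Finset.sum_const, smul_eq_mul, smul_eq_mul,
        mul_one, mul_zero, add_zero, hfilter, Nat.card_Icc]
      omega
    have h3 := Finset.sum_erase_add S id hsmem
    simp only [id_eq] at h3 ⊢
    omega
  have hexc' : ¬ isExc S' := by
    rintro ⟨j, hj⟩
    have hcM : ∀ c, S' = Finset.Icc (j + 1) c → (j = θ ∧ c = M + 1) := by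
      intro c hc
      have h1 : j + 1 ≤ M + 1 ∧ M + 1 ≤ c := by
        have := hmemM1; rw [hc, Finset.mem_Icc] at this; exact this
      have h2 : c ≤ M + 1 := by
        have hcmem : c ∈ S' := by rw [hc, Finset.mem_Icc]; omega
        exact hub' c hcmem
      have h3 : j + 1 ≤ θ + 1 := by
        have hmem : θ + 1 ∈ S' := (charA _).mpr (Or.inr (by omega))
        rw [hc, Finset.mem_Icc] at hmem; omega
      have h4 : ¬ (j + 1 ≤ θ ∧ θ ≤ c) := by
        intro h; exact hθnot (by rw [hc, Finset.mem_Icc]; omega)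
      omega
    rcases hj with hj | hj
    · rcases hcM _ hj with ⟨h1, h2⟩; omega
    · rcases hcM _ hj with ⟨h1, h2⟩; omega
  rw [hphi]
  exact ⟨hsum, h0', hexc', by rw [hphi2], hcard⟩


lemma stepB {S : Finset ℕ} (h0 : 0 ∉ S) (hne : S.Nonempty)
    (hB : ¬ Finset.Icc (S.sup id - sInf (S : Set ℕ) + 1) (S.sup id) ⊆ S)
    (hexc : ¬ isExc S) :
    (phi S).sum id = S.sum id ∧ 0 ∉ phi S ∧ ¬ isExc (phi S) ∧
      phi (phi S) = S ∧ (phi S).card = S.card + 1 := by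
  set M := S.sup id with hMdef
  set s := sInf (S : Set ℕ) with hsdef
  set t := runlen S with htdef
  have hsmem : s ∈ S := Nat.sInf_mem (Finset.coe_nonempty.mpr hne)
  have hs1 : 1 ≤ s := by
    rcases Nat.eq_zero_or_pos s with h | h
    · exact absurd (h ▸ hsmem) h0
    · exact h
  have hsle : ∀ x ∈ S, s ≤ x := fun x hx => Nat.sInf_le hx
  have hMge : ∀ x ∈ S, x ≤ M := fun x hx => Finset.le_sup (f := id) hx
  have hsM : s ≤ M := hMge s hsmem
  have hM1 : 1 ≤ M := le_trans hs1 hsM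
  have hMmem : M ∈ S := sup_mem hne
  obtain ⟨hT1, hteM, hT2, hT3⟩ := runlen_facts h0 hne
  rw [← hMdef, ← htdef] at hteM hT2 hT3
  have hts : t < s := by
    by_contra h
    push_neg at h
    apply hB
    intro x hx
    simp only [Finset.mem_Icc] at hx
    exact hT2 (by simp only [Finset.mem_Icc]; omega)
  have hM2t : 2 * t + 1 ≤ M := by
    by_contra h
    push_neg at h
    have hSeq : S = Finset.Icc (t + 1) M := by
      apply Finset.Subset.antisymm
      · intro x hx
        simp only [Finset.mem_Icc]
        have := hsle x hx; have := hMge x hx; omega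
      · intro x hx
        simp only [Finset.mem_Icc] at hx
        exact hT2 (by simp only [Finset.mem_Icc]; omega)
    have hMt : M - t + 1 ∈ S := hT2 (by simp only [Finset.mem_Icc]; omega)
    rw [hSeq, Finset.mem_Icc] at hMt
    have hMeq : M = 2 * t := by omega
    exact hexc ⟨t, Or.inr (by rw [hSeq, hMeq])⟩
  set θ := M - t + 1 with hθdef
  have hθM : θ ≤ M := by omega
  have hθt : t + 2 ≤ θ := by omega
  have hphi : phi S = insert t (S.image fun x => if θ ≤ x then x - 1 else x) := by
    rw [phi, if_neg hB]
  set S'' := insert t (S.image fun x => if θ ≤ x then x - 1 else x) with hS''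
  have char : ∀ y, y ∈ S'' ↔
      (y = t ∨ (y ∈ S ∧ y < θ) ∨ (θ - 1 ≤ y ∧ y ≤ M - 1)) := by
    intro y
    simp only [hS'', Finset.mem_insert, Finset.mem_image]
    constructor
    · rintro (rfl | ⟨x, hxS, rfl⟩)
      · exact Or.inl rfl
      · have hxM : x ≤ M := hMge x hxS
        by_cases hx : θ ≤ x
        · right; right; rw [if_pos hx]; omega
        · right; left; rw [if_neg hx]; exact ⟨hxS, by omega⟩
    · rintro (rfl | ⟨hyS, hyθ⟩ | ⟨h1, h2⟩)
      · exact Or.inl rfl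
      · exact Or.inr ⟨y, hyS, by rw [if_neg (by omega)]⟩
      · refine Or.inr ⟨y + 1, hT2 (by simp only [Finset.mem_Icc]; omega), ?_⟩
        rw [if_pos (by omega)]; omega
  have hub : ∀ y ∈ S'', y ≤ M - 1 := by
    intro y hy; rw [char] at hy
    rcases hy with rfl | ⟨hyS, hyθ⟩ | ⟨-, h⟩
    · omega
    · omega
    · exact h
  have hmemM : M - 1 ∈ S'' := (char _).mpr (Or.inr (Or.inr (by omega)))
  have htmem : t ∈ S'' := (char _).mpr (Or.inl rfl)
  have hlb : ∀ y ∈ S'', t ≤ y := by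
    intro y hy; rw [char] at hy
    rcases hy with rfl | ⟨hyS, -⟩ | ⟨h, -⟩
    · exact le_rfl
    · have := hsle y hyS; omega
    · omega
  have h0'' : 0 ∉ S'' := fun h => by have := hlb 0 h; omega
  have hne'' : S''.Nonempty := ⟨t, htmem⟩
  have hsup'' : S''.sup id = M - 1 :=
    le_antisymm (Finset.sup_le hub) (Finset.le_sup (f := id) hmemM)
  have hsinf'' : sInf (S'' : Set ℕ) = t :=
    le_antisymm (Nat.sInf_le htmem) (hlb _ (Nat.sInf_mem (Finset.coe_nonempty.mpr hne'')))
  have hA'' : Finset.Icc (S''.sup id - sInf (S'' : Set ℕ) + 1) (S''.sup id) ⊆ S'' := by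
    rw [hsup'', hsinf'']
    intro y hy
    simp only [Finset.mem_Icc] at hy
    exact (char _).mpr (Or.inr (Or.inr (by omega)))
  have hphi2 : phi S'' = S := by
    rw [phi, if_pos hA'']
    simp only [hsup'', hsinf'']
    apply Finset.ext
    intro y
    simp only [Finset.mem_image, Finset.mem_erase]
    constructor
    · rintro ⟨x, ⟨hxt, hxm⟩, rfl⟩
      rw [char] at hxm
      rcases hxm with rfl | ⟨hxS, hxθ⟩ | ⟨h1, h2⟩
      · exact absurd rfl hxt
      · by_cases hge : M - 1 - t + 1 ≤ x
        · exfalso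
          have : x = M - t := by omega
          rw [this] at hxS; exact hT3 hxS
        · rw [if_neg hge]; exact hxS
      · rw [if_pos (by omega)]
        exact hT2 (by simp only [Finset.mem_Icc]; omega)
    · intro hy
      have hyM := hMge y hy
      have hys := hsle y hy
      by_cases hyθ : θ ≤ y
      · refine ⟨y - 1, ⟨by omega, (char _).mpr (Or.inr (Or.inr (by omega)))⟩, ?_⟩
        rw [if_pos (by omega)]; omega
      · have hyne : y ≠ M - t := fun h => hT3 (h ▸ hy)
        refine ⟨y, ⟨by omega, (char _).mpr (Or.inr (Or.inl ⟨hy, by omega⟩))⟩, ?_⟩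
        rw [if_neg (by omega)]
  have ginj : ∀ a ∈ S, ∀ b ∈ S, (if θ ≤ a then a - 1 else a) = (if θ ≤ b then b - 1 else b)
      → a = b := by
    intro a ha b hb hab
    split_ifs at hab with h1 h2 h2
    · have := hMge a ha; omega
    · exfalso
      have : b = M - t := by omega
      rw [this] at hb; exact hT3 hb
    · exfalso
      have : a = M - t := by omega
      rw [this] at ha; exact hT3 ha
    · exact hab
  have htnot : t ∉ S.image (fun x => if θ ≤ x then x - 1 else x) := by
    simp only [Finset.mem_image, not_exists]
    rintro x ⟨hx, heq⟩
    have := hsle x hx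
    split_ifs at heq <;> omega
  have hcard : S''.card = S.card + 1 := by
    rw [hS'', Finset.card_insert_of_notMem htnot,
      Finset.card_image_of_injOn (fun a ha b hb h => ginj a ha b hb h)]
  have hfilter : S.filter (fun x => θ ≤ x) = Finset.Icc θ M := by
    apply Finset.ext
    intro z
    simp only [Finset.mem_filter, Finset.mem_Icc]
    constructor
    · rintro ⟨hzS, hz⟩
      exact ⟨hz, hMge z hzS⟩
    · rintro ⟨h1, h2⟩
      have hzS : z ∈ S := hT2 (by simp only [Finset.mem_Icc]; omega)
      exact ⟨hzS, h1⟩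
  have hsum : S''.sum id = S.sum id := by
    rw [hS'', Finset.sum_insert htnot, Finset.sum_image ginj]
    simp only [id_eq]
    have key : (∑ x ∈ S, (if θ ≤ x then x - 1 else x)) + (∑ x ∈ S, if θ ≤ x then (1:ℕ) else 0)
        = ∑ x ∈ S, x := by
      rw [← Finset.sum_add_distrib]
      apply Finset.sum_congr rfl
      intro x hx
      split_ifs with h <;> omega
    have h5 : (∑ x ∈ S, if θ ≤ x then (1:ℕ) else 0) = t := by
      rw [Finset.sum_ite, Finset.sum_const, Finset.sum_const, smul_eq_mul, smul_eq_mul,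
        mul_one, mul_zero, add_zero, hfilter, Nat.card_Icc]
      omega
    omega
  have hexc'' : ¬ isExc S'' := by
    rintro ⟨j, hj⟩
    have hcM : ∀ c, S'' = Finset.Icc (j + 1) c → (j + 1 = t ∧ c = M - 1) := by
      intro c hc
      have h1 : j + 1 ≤ t ∧ t ≤ c := by
        have := htmem; rw [hc, Finset.mem_Icc] at this; exact this
      have h2 : t ≤ j + 1 := by
        apply hlb
        rw [hc, Finset.mem_Icc]; omega
      have h3 : M - 1 ≤ c := by
        have := hmemM; rw [hc, Finset.mem_Icc] at this; omega
      have h4 : c ≤ M - 1 := by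
        apply hub
        rw [hc, Finset.mem_Icc]; omega
      omega
    rcases hj with hj | hj
    · rcases hcM _ hj with ⟨h1, h2⟩; omega
    · rcases hcM _ hj with ⟨h1, h2⟩; omega
  rw [hphi]
  exact ⟨hsum, h0'', hexc'', by rw [hphi2], hcard⟩


lemma phi_main {S : Finset ℕ} (h0 : 0 ∉ S) (hexc : ¬ isExc S) :
    (phi S).sum id = S.sum id ∧ 0 ∉ phi S ∧ ¬ isExc (phi S) ∧ phi (phi S) = S ∧
      ((-1:ℤ) ^ S.card + (-1:ℤ) ^ (phi S).card = 0) ∧ phi S ≠ S := by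
  have hne : S.Nonempty := by
    rcases S.eq_empty_or_nonempty with h | h
    · exact absurd ⟨0, Or.inr (by rw [h, mul_zero, Finset.Icc_eq_empty (by omega)])⟩ hexc
    · exact h
  by_cases hA : Finset.Icc (S.sup id - sInf (S : Set ℕ) + 1) (S.sup id) ⊆ S
  · obtain ⟨h1, h2, h3, h4, h5⟩ := stepA h0 hne hA hexc
    refine ⟨h1, h2, h3, h4, ?_, ?_⟩
    · rw [h5, pow_succ]; ring
    · intro he; rw [he] at h5; omega
  · obtain ⟨h1, h2, h3, h4, h5⟩ := stepB h0 hne hA hexc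
    refine ⟨h1, h2, h3, h4, ?_, ?_⟩
    · rw [h5, pow_succ]; ring
    · intro he; rw [he] at h5; omega

lemma sum_zero_invol (k : ℕ) (T : Finset (Finset ℕ))
    (hT : ∀ S ∈ T, S.sum id = k ∧ 0 ∉ S ∧ ¬ isExc S)
    (hT2 : ∀ S : Finset ℕ, S.sum id = k → 0 ∉ S → ¬ isExc S → S ∈ T) :
    (∑ S ∈ T, (-1:ℤ) ^ S.card) = 0 := by
  apply Finset.sum_involution (fun S _ => phi S)
  · intro S hS
    obtain ⟨h1, h2, h3⟩ := hT S hS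
    exact (phi_main h2 h3).2.2.2.2.1
  · intro S hS _
    obtain ⟨h1, h2, h3⟩ := hT S hS
    exact (phi_main h2 h3).2.2.2.2.2
  · intro S hS
    obtain ⟨h1, h2, h3⟩ := hT S hS
    obtain ⟨p1, p2, p3, p4, p5, p6⟩ := phi_main h2 h3
    exact hT2 _ (by rw [p1, h1]) p2 p3
  · intro S hS
    obtain ⟨h1, h2, h3⟩ := hT S hS
    exact (phi_main h2 h3).2.2.2.1

lemma sum_Ioc_two (n : ℕ) : 2 * (Finset.Ioc 0 n).sum id = n * (n + 1) := by
  induction n with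
  | zero => simp
  | succ n ih =>
    have h : (Finset.Ioc 0 (n + 1)).sum id = (Finset.Ioc 0 n).sum id + (n + 1) :=
      Finset.sum_Ioc_succ_top (Nat.zero_le n) id
    have e : (n + 1) * (n + 1 + 1) = n * (n + 1) + 2 * (n + 1) := by ring
    omega

lemma sum_Icc_from (j b : ℕ) (h : j ≤ b) :
    2 * (Finset.Icc (j + 1) b).sum id + j * (j + 1) = b * (b + 1) := by
  have key : (Finset.Ioc 0 j).sum id + (Finset.Ioc j b).sum id = (Finset.Ioc 0 b).sum id :=
    Finset.sum_Ioc_consecutive id (Nat.zero_le j) h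
  rw [Finset.Icc_add_one_left_eq_Ioc]
  have h1 := sum_Ioc_two j
  have h2 := sum_Ioc_two b
  omega

lemma sumE1 (j : ℕ) : 2 * ((Finset.Icc (j + 1) (2 * j + 1)).sum id) = (j + 1) * (3 * j + 2) := by
  have h := sum_Icc_from j (2 * j + 1) (by omega)
  have e1 : (2 * j + 1) * (2 * j + 1 + 1) = 4 * (j * j) + 6 * j + 2 := by ring
  have e2 : j * (j + 1) = j * j + j := by ring
  have e3 : (j + 1) * (3 * j + 2) = 3 * (j * j) + 5 * j + 2 := by ring
  omega

lemma sumE2 (j : ℕ) : 2 * ((Finset.Icc (j + 1) (2 * j)).sum id) = j * (3 * j + 1) := by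
  have h := sum_Icc_from j (2 * j) (by omega)
  have e1 : (2 * j) * (2 * j + 1) = 4 * (j * j) + 2 * j := by ring
  have e2 : j * (j + 1) = j * j + j := by ring
  have e3 : j * (3 * j + 1) = 3 * (j * j) + j := by ring
  omega

lemma exc_cases {S : Finset ℕ} {k : ℕ} (h : isExc S) (hsum : S.sum id = k) :
    ∃ j : ℕ, (S = Finset.Icc (j + 1) (2 * j + 1) ∧ (6 * j + 5) * (6 * j + 5) = 24 * k + 1)
      ∨ (S = Finset.Icc (j + 1) (2 * j) ∧ (6 * j + 1) * (6 * j + 1) = 24 * k + 1) := by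
  obtain ⟨j, hj | hj⟩ := h
  · refine ⟨j, Or.inl ⟨hj, ?_⟩⟩
    have h1 := sumE1 j
    rw [hj] at hsum
    have e : (6 * j + 5) * (6 * j + 5) = 12 * ((j + 1) * (3 * j + 2)) + 1 := by ring
    omega
  · refine ⟨j, Or.inr ⟨hj, ?_⟩⟩
    have h1 := sumE2 j
    rw [hj] at hsum
    have e : (6 * j + 1) * (6 * j + 1) = 12 * (j * (3 * j + 1)) + 1 := by ring
    omega

lemma mem_S {k : ℕ} {S : Finset ℕ} (hsum : S.sum id = k) (h0 : 0 ∉ S) :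
    S ∈ (Finset.Icc 1 k).powerset.filter (fun T => T.sum id = k) := by
  simp only [Finset.mem_filter, Finset.mem_powerset]
  refine ⟨?_, hsum⟩
  intro x hx
  simp only [Finset.mem_Icc]
  constructor
  · rcases Nat.eq_zero_or_pos x with h | h
    · exact absurd (h ▸ hx) h0
    · exact h
  · rw [← hsum]; exact mem_le_sum hx

lemma zero_not_mem_S {k : ℕ} {S : Finset ℕ}
    (h : S ∈ (Finset.Icc 1 k).powerset.filter (fun T => T.sum id = k)) : 0 ∉ S := by
  simp only [Finset.mem_filter, Finset.mem_powerset] at h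
  intro hz
  have := h.1 hz
  simp only [Finset.mem_Icc] at this
  omega

lemma sq_mod6 {m k : ℕ} (h : m * m = 24 * k + 1) : m % 6 = 1 ∨ m % 6 = 5 := by
  have hexp : m = 6 * (m / 6) + m % 6 := (Nat.div_add_mod m 6).symm
  have hr6 : m % 6 < 6 := Nat.mod_lt _ (by omega)
  set q := m / 6
  set r := m % 6 with hrdef
  obtain ⟨A, B, hAB⟩ : ∃ A B, m * m = 36 * A + 12 * B + r * r :=
    ⟨q * q, q * r, by rw [hexp]; ring⟩
  interval_cases r <;> omega

lemma tref1 (j : ℕ) : trefEps (6 * j + 1) = -(-1 : ℤ) ^ j := by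
  rcases Nat.even_or_odd j with ⟨c, rfl⟩ | ⟨c, rfl⟩
  · rw [trefEps, if_pos (Or.inl (by omega)), Even.neg_one_pow ⟨c, rfl⟩]
  · rw [trefEps, if_neg (by omega), if_pos (Or.inr (by omega)),
      Odd.neg_one_pow ⟨c, rfl⟩]
    ring

lemma tref5 (j : ℕ) : trefEps (6 * j + 5) = -(-1 : ℤ) ^ (j + 1) := by
  rcases Nat.even_or_odd j with ⟨c, rfl⟩ | ⟨c, rfl⟩
  · rw [trefEps, if_neg (by omega), if_pos (Or.inl (by omega)),
      Odd.neg_one_pow ⟨c, by omega⟩]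
    ring
  · rw [trefEps, if_pos (Or.inr (by omega)), Even.neg_one_pow ⟨c + 1, by omega⟩]

lemma coeff_prod (k : ℕ) :
    (PowerSeries.coeff k) (∏ n ∈ Finset.Icc 1 k, (1 - (X : PowerSeries ℤ) ^ n))
      = ∑ T ∈ (Finset.Icc 1 k).powerset, (if T.sum id = k then (-1 : ℤ) ^ T.card else 0) := by
  have h1 : ∀ n ∈ Finset.Icc 1 k, (1 - (X : PowerSeries ℤ) ^ n) = (- X ^ n) + 1 := by
    intro n _; ring
  rw [Finset.prod_congr rfl h1, Finset.prod_add, map_sum]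
  apply Finset.sum_congr rfl
  intro T hT
  rw [Finset.prod_const_one, mul_one]
  have h2 : ∏ i ∈ T, (-(X : PowerSeries ℤ) ^ i)
      = PowerSeries.C ((-1) ^ T.card) * X ^ (T.sum id) := by
    have h3 : ∀ i ∈ T, (-(X : PowerSeries ℤ) ^ i) = (-1) * X ^ i := by intro i _; ring
    rw [Finset.prod_congr rfl h3, Finset.prod_mul_distrib, Finset.prod_const,
      Finset.prod_pow_eq_pow_sum]
    have h4 : (-1 : PowerSeries ℤ) = PowerSeries.C (-1) := by
      rw [map_neg, map_one]
    rw [h4, ← map_pow]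
    rfl
  rw [h2, PowerSeries.coeff_C_mul, PowerSeries.coeff_X_pow]
  by_cases h : T.sum id = k
  · rw [if_pos h, if_pos h.symm, mul_one]
  · rw [if_neg h, if_neg (fun hh => h hh.symm), mul_zero]

end Pent


/-- Euler's pentagonal number theorem, restated via the trefoil sign sequence:
as formal power series in `q`, `∑_{m ≥ 1} ε(m) q^((m²−1)/24) = −∏_{n ≥ 1} (1 − qⁿ)`.
Both sides are compared coefficientwise; the coefficient of `q^k` in the infinite
product is the coefficient of `q^k` in the finite product `∏_{n=1}^{k} (1 − qⁿ)`,
since the further factors do not affect degrees `≤ k`. -/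
theorem pentagonal_via_trefoil_eps (k : ℕ) :
    (∑ m ∈ Finset.range (24 * k + 2), if m ^ 2 = 24 * k + 1 then trefEps m else 0)
      = - (PowerSeries.coeff k)
          (∏ n ∈ Finset.Icc 1 k, (1 - (X : PowerSeries ℤ) ^ n)) := by
  classical
  rw [Pent.coeff_prod k]
  conv_rhs => rw [← Finset.sum_filter]
  set 𝒮 := (Finset.Icc 1 k).powerset.filter (fun T => T.sum id = k) with h𝒮
  by_cases hm : ∃ m, m * m = 24 * k + 1
  · obtain ⟨m, hmm⟩ := hm
    have hm1 : 1 ≤ m := by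
      rcases Nat.eq_zero_or_pos m with rfl | h
      · simp at hmm
      · exact h
    have hmlt : m < 24 * k + 2 := by
      have := Nat.le_mul_of_pos_left m hm1
      omega
    have hLHS : (∑ m' ∈ Finset.range (24 * k + 2),
        if m' ^ 2 = 24 * k + 1 then trefEps m' else 0) = trefEps m := by
      rw [Finset.sum_eq_single m]
      · rw [if_pos (by rw [pow_two]; exact hmm)]
      · intro b hb hbm
        rw [if_neg]
        intro hb2
        rw [pow_two] at hb2
        exact hbm (Nat.mul_self_inj.mp (by rw [hb2, hmm]))
      · intro hnot; exact absurd (Finset.mem_range.mpr hmlt) hnot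
    rw [hLHS]
    rcases Pent.sq_mod6 hmm with hr | hr
    · -- m % 6 = 1
      set j := m / 6 with hj
      have hmj : m = 6 * j + 1 := by omega
      have h2k : 2 * k = j * (3 * j + 1) := by
        have e : (6 * j + 1) * (6 * j + 1) = 12 * (j * (3 * j + 1)) + 1 := by ring
        rw [hmj] at hmm; omega
      set E := Finset.Icc (j + 1) (2 * j) with hE
      have hsumE : E.sum id = k := by have := Pent.sumE2 j; rw [hE]; omega
      have hcardE : E.card = j := by rw [hE, Nat.card_Icc]; omega
      have hE𝒮 : E ∈ 𝒮 := Pent.mem_S hsumE (by rw [hE]; simp only [Finset.mem_Icc]; omega)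
      have hsplit := (Finset.add_sum_erase 𝒮 (fun T => (-1:ℤ) ^ T.card) hE𝒮).symm
      have hzero : (∑ S ∈ 𝒮.erase E, (-1:ℤ) ^ S.card) = 0 := by
        apply Pent.sum_zero_invol k
        · intro S hS
          have hS𝒮 := Finset.mem_of_mem_erase hS
          have hSne := Finset.ne_of_mem_erase hS
          have h0S := Pent.zero_not_mem_S hS𝒮
          have hsum : S.sum id = k := (Finset.mem_filter.mp hS𝒮).2
          refine ⟨hsum, h0S, ?_⟩
          intro hexc
          obtain ⟨j', hc⟩ := Pent.exc_cases hexc hsum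
          rcases hc with ⟨hSeq, hsq⟩ | ⟨hSeq, hsq⟩
          · have : 6 * j' + 5 = m := Nat.mul_self_inj.mp (by rw [hsq, hmm])
            omega
          · have h65 : 6 * j' + 1 = m := Nat.mul_self_inj.mp (by rw [hsq, hmm])
            have hjj : j' = j := by omega
            exact hSne (by rw [hSeq, hjj])
        · intro S hsum h0S hnexc
          apply Finset.mem_erase.mpr
          refine ⟨?_, Pent.mem_S hsum h0S⟩
          intro hSE
          exact hnexc (hSE ▸ ⟨j, Or.inr rfl⟩)
      rw [hsplit, hzero, add_zero, hcardE, hmj, Pent.tref1 j]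
    · -- m % 6 = 5
      set j := m / 6 with hj
      have hmj : m = 6 * j + 5 := by omega
      have h2k : 2 * k = (j + 1) * (3 * j + 2) := by
        have e : (6 * j + 5) * (6 * j + 5) = 12 * ((j + 1) * (3 * j + 2)) + 1 := by ring
        rw [hmj] at hmm; omega
      set E := Finset.Icc (j + 1) (2 * j + 1) with hE
      have hsumE : E.sum id = k := by have := Pent.sumE1 j; rw [hE]; omega
      have hcardE : E.card = j + 1 := by rw [hE, Nat.card_Icc]; omega
      have hE𝒮 : E ∈ 𝒮 := Pent.mem_S hsumE (by rw [hE]; simp only [Finset.mem_Icc]; omega)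
      have hsplit := (Finset.add_sum_erase 𝒮 (fun T => (-1:ℤ) ^ T.card) hE𝒮).symm
      have hzero : (∑ S ∈ 𝒮.erase E, (-1:ℤ) ^ S.card) = 0 := by
        apply Pent.sum_zero_invol k
        · intro S hS
          have hS𝒮 := Finset.mem_of_mem_erase hS
          have hSne := Finset.ne_of_mem_erase hS
          have h0S := Pent.zero_not_mem_S hS𝒮
          have hsum : S.sum id = k := (Finset.mem_filter.mp hS𝒮).2
          refine ⟨hsum, h0S, ?_⟩
          intro hexc
          obtain ⟨j', hc⟩ := Pent.exc_cases hexc hsum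
          rcases hc with ⟨hSeq, hsq⟩ | ⟨hSeq, hsq⟩
          · have h65 : 6 * j' + 5 = m := Nat.mul_self_inj.mp (by rw [hsq, hmm])
            have hjj : j' = j := by omega
            exact hSne (by rw [hSeq, hjj])
          · have : 6 * j' + 1 = m := Nat.mul_self_inj.mp (by rw [hsq, hmm])
            omega
        · intro S hsum h0S hnexc
          apply Finset.mem_erase.mpr
          refine ⟨?_, Pent.mem_S hsum h0S⟩
          intro hSE
          exact hnexc (hSE ▸ ⟨j, Or.inl rfl⟩)
      rw [hsplit, hzero, add_zero, hcardE, hmj, Pent.tref5 j]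
  · push_neg at hm
    have hLHS : (∑ m' ∈ Finset.range (24 * k + 2),
        if m' ^ 2 = 24 * k + 1 then trefEps m' else 0) = 0 := by
      apply Finset.sum_eq_zero
      intro b hb
      rw [if_neg]
      intro h
      exact hm b (by rw [← pow_two]; exact h)
    have hzero : (∑ S ∈ 𝒮, (-1:ℤ) ^ S.card) = 0 := by
      apply Pent.sum_zero_invol k
      · intro S hS
        have h0S := Pent.zero_not_mem_S hS
        have hsum : S.sum id = k := (Finset.mem_filter.mp hS).2
        refine ⟨hsum, h0S, ?_⟩
        intro hexc
        obtain ⟨j', hc⟩ := Pent.exc_cases hexc hsum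
        rcases hc with ⟨-, hsq⟩ | ⟨-, hsq⟩
        · exact hm _ hsq
        · exact hm _ hsq
      · intro S hsum h0S _
        exact Pent.mem_S hsum h0S
    rw [hLHS, hzero, neg_zero]
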